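/- If the multi-indices J = (j_1,...,j_d) and L = (l_1,...,l_d) with entries in {1,...,n} are not of the same type (i.e., there is no σ ∈ S_d with j_{σ(k)} = l_k for all k), then ∫ u_{1,j_1} ⋯ u_{1,j_d} · conj(u_{1,l_1}) ⋯ conj(u_{1,l_d}) dμ(U) = 0 over U_n with Haar measure μ. -/

import Mathlib

open MeasureTheory Matrix

noncomputable instance unitaryGroupMeasurableSpace (n : ℕ) :
    MeasurableSpace (Matrix.unitaryGroup (Fin n) ℂ) := borel _

lemma isCompact_unitaryGroup (n : ℕ) :
    IsCompact (Matrix.unitaryGroup (Fin n) ℂ : Set (Matrix (Fin n) (Fin n) ℂ)) := by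
  have hclosed : IsClosed (Matrix.unitaryGroup (Fin n) ℂ : Set (Matrix (Fin n) (Fin n) ℂ)) := by
    have : (Matrix.unitaryGroup (Fin n) ℂ : Set (Matrix (Fin n) (Fin n) ℂ)) =
        {A | star A * A = 1} ∩ {A | A * star A = 1} := by
      ext A; simpa using Unitary.mem_iff
    rw [this]
    exact ((isClosed_singleton.preimage
        ((continuous_id.matrix_conjTranspose.matrix_mul continuous_id))).inter
      (isClosed_singleton.preimage
        ((continuous_id.matrix_mul continuous_id.matrix_conjTranspose))))
  have hsub : (Matrix.unitaryGroup (Fin n) ℂ : Set (Matrix (Fin n) (Fin n) ℂ)) ⊆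
      Set.univ.pi fun _ : Fin n => Set.univ.pi fun _ : Fin n => Metric.closedBall (0:ℂ) 1 := by
    intro A hA i _ j _
    simpa using entry_norm_bound_of_unitary hA i j
  exact IsCompact.of_isClosed_subset
    (isCompact_univ_pi fun _ => isCompact_univ_pi fun _ => isCompact_closedBall 0 1)
    hclosed hsub

instance (n : ℕ) : CompactSpace (Matrix.unitaryGroup (Fin n) ℂ) :=
  isCompact_iff_compactSpace.mp (isCompact_unitaryGroup n)

instance (n : ℕ) : IsTopologicalGroup (Matrix.unitaryGroup (Fin n) ℂ) where
  continuous_mul := ((continuous_subtype_val.comp continuous_fst).matrix_mul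
      (continuous_subtype_val.comp continuous_snd)).subtype_mk _
  continuous_inv := (continuous_subtype_val.matrix_conjTranspose).subtype_mk _

instance (n : ℕ) : BorelSpace (Matrix.unitaryGroup (Fin n) ℂ) := ⟨rfl⟩

instance (n : ℕ) : SecondCountableTopology (Matrix.unitaryGroup (Fin n) ℂ) := by
  haveI : SecondCountableTopology (Matrix (Fin n) (Fin n) ℂ) := by
    exact inferInstanceAs (SecondCountableTopology (Fin n → Fin n → ℂ))
  exact Topology.IsEmbedding.subtypeVal.secondCountableTopology

/-- A left-invariant probability measure on the unitary group is right invariant. -/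
lemma map_mul_right_eq_self_of_left_invariant (n : ℕ)
    (μ : Measure (Matrix.unitaryGroup (Fin n) ℂ)) [IsProbabilityMeasure μ]
    (hinv : ∀ V : Matrix.unitaryGroup (Fin n) ℂ, μ.map (fun U => V * U) = μ)
    (V : Matrix.unitaryGroup (Fin n) ℂ) : μ.map (fun U => U * V) = μ := by
  haveI hli : μ.IsMulLeftInvariant := ⟨fun g => hinv g⟩
  haveI : μ.IsOpenPosMeasure :=
    isOpenPosMeasure_of_mulLeftInvariant_of_compact Set.univ isCompact_univ (by simp)
  haveI : μ.IsHaarMeasure := ⟨⟩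
  set ν := μ.map (fun U => U * V) with hν
  haveI : IsProbabilityMeasure ν :=
    Measure.isProbabilityMeasure_map (measurable_mul_const V).aemeasurable
  haveI : ν.IsMulLeftInvariant := by
    constructor
    intro g
    rw [hν, Measure.map_map (measurable_const_mul g) (measurable_mul_const V),
      show ((g * ·) ∘ (· * V)) = ((· * V) ∘ (g * ·)) from funext fun x => (mul_assoc g x V).symm,
      ← Measure.map_map (measurable_mul_const V) (measurable_const_mul g),
      hli.map_mul_left_eq_self g]
  have h := Measure.isMulLeftInvariant_eq_smul ν μ
  have huniv := congrArg (fun m : Measure _ => m Set.univ) h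
  simp only [measure_univ, Measure.smul_apply, ENNReal.smul_def, smul_eq_mul, mul_one] at huniv
  rw [h, show Measure.haarScalarFactor ν μ = 1 from
    ENNReal.coe_eq_one.mp huniv.symm, one_smul]

lemma exists_card_ne {d n : ℕ} (J L : Fin d → Fin n)
    (htype : ¬ ∃ σ : Equiv.Perm (Fin d), ∀ k, J (σ k) = L k) :
    ∃ m : Fin n, Fintype.card {k // J k = m} ≠ Fintype.card {k // L k = m} := by
  by_contra hc
  push_neg at hc
  have e : ∀ m : Fin n, {k // L k = m} ≃ {k // J k = m} :=
    fun m => Fintype.equivOfCardEq (hc m).symm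
  exact htype ⟨Equiv.ofFiberEquiv e, fun k => Equiv.ofFiberEquiv_map e k⟩

lemma prod_ite_eq_pow_card {d : ℕ} (p : Fin d → Prop) [DecidablePred p] (z : ℂ) :
    ∏ k : Fin d, (if p k then z else 1) = z ^ (Fintype.card {k // p k}) := by
  rw [Finset.prod_ite, Finset.prod_const, Finset.prod_const, one_pow, mul_one,
    Fintype.card_subtype]

/-- If the multi-indices `J` and `L` are not of the same type (no permutation `σ` of the
positions satisfies `J ∘ σ = L`), then
`∫ u_{1,j_1} ⋯ u_{1,j_d} conj(u_{1,l_1}) ⋯ conj(u_{1,l_d}) dμ(U) = 0` for the normalized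
Haar measure `μ` on `U_n`. -/
theorem haar_integral_first_row_ne_type_eq_zero
    (n d : ℕ) (hn : 0 < n) (μ : Measure (Matrix.unitaryGroup (Fin n) ℂ))
    [IsProbabilityMeasure μ]
    (hinv : ∀ V : Matrix.unitaryGroup (Fin n) ℂ, μ.map (fun U => V * U) = μ)
    (J L : Fin d → Fin n)
    (htype : ¬ ∃ σ : Equiv.Perm (Fin d), ∀ k, J (σ k) = L k) :
    (∫ U : Matrix.unitaryGroup (Fin n) ℂ,
        (∏ k : Fin d, (U : Matrix (Fin n) (Fin n) ℂ) ⟨0, hn⟩ (J k)) *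
        (∏ k : Fin d, (starRingEnd ℂ) ((U : Matrix (Fin n) (Fin n) ℂ) ⟨0, hn⟩ (L k))) ∂μ) =
      0 := by
  classical
  set i0 : Fin n := ⟨0, hn⟩
  set F : Matrix.unitaryGroup (Fin n) ℂ → ℂ := fun U =>
    (∏ k : Fin d, (U : Matrix (Fin n) (Fin n) ℂ) i0 (J k)) *
    (∏ k : Fin d, (starRingEnd ℂ) ((U : Matrix (Fin n) (Fin n) ℂ) i0 (L k))) with hF
  obtain ⟨m₀, hm₀⟩ := exists_card_ne J L htype
  set a : ℕ := Fintype.card {k // J k = m₀}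
  set b : ℕ := Fintype.card {k // L k = m₀}
  set c : ℤ := (a : ℤ) - b with hcdef
  have hc : c ≠ 0 := sub_ne_zero.mpr (by exact_mod_cast hm₀)
  set w : ℂ := (Real.pi : ℂ) * Complex.I / (c : ℂ) with hw
  set z : ℂ := Complex.exp w with hz
  have hconjw : (starRingEnd ℂ) w = -w := by
    simp only [hw, map_div₀, _root_.map_mul, Complex.conj_ofReal, Complex.conj_I, map_intCast]
    ring
  have hconjz : (starRingEnd ℂ) z = Complex.exp (-w) := by
    rw [hz, ← Complex.exp_conj, hconjw]
  have hzz : (starRingEnd ℂ) z * z = 1 := by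
    rw [hconjz, hz, ← Complex.exp_add, neg_add_cancel, Complex.exp_zero]
  have hkey : z ^ a * ((starRingEnd ℂ) z) ^ b = -1 := by
    rw [hconjz, hz, ← Complex.exp_nat_mul, ← Complex.exp_nat_mul, ← Complex.exp_add]
    have : (a : ℂ) * w + (b : ℂ) * -w = (c : ℂ) * w := by
      rw [hcdef]; push_cast; ring
    rw [this, hw, mul_div_cancel₀ _ (by exact_mod_cast hc : ((c : ℤ) : ℂ) ≠ 0)]
    exact Complex.exp_pi_mul_I
  -- the diagonal unitary matrix
  set f : Fin n → ℂ := fun j => if j = m₀ then z else 1 with hf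
  have hfc : ∀ j, star (f j) * f j = 1 := by
    intro j
    by_cases h : j = m₀ <;> simp [hf, h, Complex.star_def, hzz]
  have hmem : Matrix.diagonal f ∈ Matrix.unitaryGroup (Fin n) ℂ := by
    rw [Unitary.mem_iff]
    constructor
    · rw [Matrix.star_eq_conjTranspose, Matrix.diagonal_conjTranspose,
        Matrix.diagonal_mul_diagonal]
      have h1 : (fun i => (star f) i * f i) = (1 : Fin n → ℂ) := funext fun j => hfc j
      rw [h1]; exact Matrix.diagonal_one
    · rw [Matrix.star_eq_conjTranspose, Matrix.diagonal_conjTranspose,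
        Matrix.diagonal_mul_diagonal]
      have h1 : (fun i => f i * (star f) i) = (1 : Fin n → ℂ) :=
        funext fun j => by rw [mul_comm]; exact hfc j
      rw [h1]; exact Matrix.diagonal_one
  set D : Matrix.unitaryGroup (Fin n) ℂ := ⟨Matrix.diagonal f, hmem⟩ with hD
  -- pointwise transformation
  have hpoint : ∀ U : Matrix.unitaryGroup (Fin n) ℂ,
      F (U * D) = (z ^ a * ((starRingEnd ℂ) z) ^ b) * F U := by
    intro U
    have hcoe : ∀ j, ((U * D : Matrix.unitaryGroup (Fin n) ℂ) :
        Matrix (Fin n) (Fin n) ℂ) i0 j = (U : Matrix (Fin n) (Fin n) ℂ) i0 j * f j := by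
      intro j
      rw [Submonoid.coe_mul]
      exact Matrix.mul_diagonal _ _ _ _
    simp only [hF, hcoe, _root_.map_mul, Finset.prod_mul_distrib]
    have h1 : ∏ k : Fin d, f (J k) = z ^ a := by
      simp only [hf]
      exact prod_ite_eq_pow_card (fun k => J k = m₀) z
    have h2 : ∏ k : Fin d, (starRingEnd ℂ) (f (L k)) = ((starRingEnd ℂ) z) ^ b := by
      have : ∀ k, (starRingEnd ℂ) (f (L k)) =
          if L k = m₀ then (starRingEnd ℂ) z else 1 := by
        intro k; by_cases h : L k = m₀ <;> simp [hf, h]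
      simp only [this]
      exact prod_ite_eq_pow_card (fun k => L k = m₀) _
    rw [h1, h2]
    ring
  -- continuity of F
  have hentry : ∀ j : Fin n, Continuous fun U : Matrix.unitaryGroup (Fin n) ℂ =>
      (U : Matrix (Fin n) (Fin n) ℂ) i0 j := fun j =>
    (continuous_apply j).comp ((continuous_apply i0).comp continuous_subtype_val)
  have hFc : Continuous F := by
    apply Continuous.mul
    · exact continuous_finset_prod _ fun k _ => hentry (J k)
    · exact continuous_finset_prod _ fun k _ => (Complex.continuous_conj.comp (hentry (L k)))
  -- the invariance argument
  have hright := map_mul_right_eq_self_of_left_invariant n μ hinv D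
  have hstep : ∫ U, F U ∂μ = (z ^ a * ((starRingEnd ℂ) z) ^ b) * ∫ U, F U ∂μ := by
    conv_lhs => rw [← hright]
    rw [integral_map (measurable_mul_const D).aemeasurable
      (hFc.aestronglyMeasurable)]
    simp_rw [hpoint]
    exact integral_const_mul _ _
  rw [hkey] at hstep
  have : (∫ U, F U ∂μ) = 0 := by linear_combination (1/2 : ℂ) * hstep
  exact this
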